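/- Let n ≥ 5, let G = D_{2n} = ⟨a, b | a^n = b^2 = 1, bab = a^{-1}⟩, and suppose i, j, k, ℓ, m are integers satisfying: 1 < i, j, k < n with i, j, k pairwise coprime; gcd(i,n) > 1, gcd(j,n) > 1 and gcd(k,n) > 1; ℓ^2 ≡ m^2 ≡ 1 (mod n); ℓ, m and ℓm are all ≢ 1 (mod n); k ≡ jℓ + i ≡ im + j (mod n); and i(ℓ+1) ≡ j(m+1) ≡ 0 (mod n). Set C = {b, ba^i, ba^j, ba^k}. Then |C| = 4, C is a transitive inverse-closed generating set of G, if n is even then n/2 ∉ {i, j, k}, and Aut(G;C) = ⟨τ_ℓφ^i, τ_mφ^j⟩ is isomorphic to Z_2 × Z_2. -/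

import Mathlib

namespace NETCayley

variable {G : Type*} [Group G]

/-- `Aut(G;C)`: the subgroup of `MulAut G` consisting of automorphisms `σ` with `C^σ = C`. -/
def autSub (C : Set G) : Subgroup (MulAut G) where
  carrier := {σ : MulAut G | ⇑σ '' C = C}
  one_mem' := by simp
  mul_mem' := by
    intro a b ha hb
    rw [Set.mem_setOf_eq] at ha hb ⊢
    have h : ⇑(a * b) = ⇑a ∘ ⇑b := rfl
    rw [h, Set.image_comp, hb, ha]
  inv_mem' := by
    intro a ha
    rw [Set.mem_setOf_eq] at ha ⊢
    conv_lhs => rw [← ha]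
    rw [← Set.image_comp]
    have h : ⇑a⁻¹ ∘ ⇑a = id := by funext x; simp
    rw [h, Set.image_id]

/-- `A(G;C)`: proper normal `Aut(G;C)`-invariant subgroups of `G`. -/
def setA (C : Set G) : Set (Subgroup G) :=
  {N | N.Normal ∧ N ≠ ⊤ ∧ ∀ σ ∈ autSub C, N.map (σ : MulAut G).toMonoidHom = N}

/-- `A_max(G;C)`: maximal (by inclusion) elements of `A(G;C)`. -/
def setAmax (C : Set G) : Set (Subgroup G) :=
  {N | N ∈ setA C ∧ ∀ M ∈ setA C, N ≤ M → N = M}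

/-- `Φ(G;C)`: the intersection of all members of `A_max(G;C)`. -/
def PhiC (C : Set G) : Subgroup G := sInf (setAmax C)

/-- `X` is normal `C`-closed: `(x^g)^σ ∈ X` for all `x ∈ X`, `g ∈ G`, `σ ∈ Aut(G;C)`. -/
def NormalCClosed (C X : Set G) : Prop :=
  ∀ x ∈ X, ∀ g : G, ∀ σ ∈ autSub C, σ (g⁻¹ * x * g) ∈ X

/-- The normal `C`-closure of `X`: `{(x^g)^σ : x ∈ X, g ∈ G, σ ∈ Aut(G;C)}`. -/
def normalCClosure (C X : Set G) : Set G :=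
  {y | ∃ x ∈ X, ∃ g : G, ∃ σ ∈ autSub C, σ (g⁻¹ * x * g) = y}

/-- The orbit of `c` under the natural action of `Aut(G;C)`. -/
def orbitC (C : Set G) (c : G) : Set G := {y | ∃ σ ∈ autSub C, σ c = y}

/-- `C` is a transitive set: either `Aut(G;C)` is transitive on `C`, or there are exactly two
orbits `C₊`, `C₋` on `C` with `C = C₊ ∪ C₋` and `C₋ = C₊⁻¹`. -/
def TransSet (C : Set G) : Prop :=
  (∀ c ∈ C, ∀ c' ∈ C, ∃ σ ∈ autSub C, σ c = c') ∨
  (∃ cp ∈ C, ∃ cm ∈ C, orbitC C cp ≠ orbitC C cm ∧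
    C = orbitC C cp ∪ orbitC C cm ∧ orbitC C cm = (orbitC C cp)⁻¹)

/-- A transitive inverse-closed generating set of `G`. -/
def IsTransGenSet (C : Set G) : Prop :=
  (1 : G) ∉ C ∧ (∀ c ∈ C, c⁻¹ ∈ C) ∧ Subgroup.closure C = ⊤ ∧ TransSet C

/-- The map underlying the automorphism `τ_k φ^m` of the dihedral group:
`a^i ↦ a^{ki}`, `b a^i ↦ b a^{ki+m}`. -/
def dihMap (n : ℕ) (k m : ZMod n) : DihedralGroup n → DihedralGroup n
  | .r i => .r (k * i)
  | .sr i => .sr (k * i + m)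

/-- The automorphism `τ_k φ^m` of the dihedral group (for `k` a unit mod `n`). -/
def dihAut (n : ℕ) (k : (ZMod n)ˣ) (m : ZMod n) : MulAut (DihedralGroup n) where
  toFun := dihMap n (k : ZMod n) m
  invFun := dihMap n ((k⁻¹ : (ZMod n)ˣ) : ZMod n) (-(((k⁻¹ : (ZMod n)ˣ) : ZMod n) * m))
  left_inv := by
    have hk : ((k⁻¹ : (ZMod n)ˣ) : ZMod n) * ((k : (ZMod n)ˣ) : ZMod n) = 1 := k.inv_mul
    rintro (i | i) <;> simp only [dihMap] <;> congr 1 <;> linear_combination (i : ZMod n) * hk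
  right_inv := by
    have hk : ((k : (ZMod n)ˣ) : ZMod n) * ((k⁻¹ : (ZMod n)ˣ) : ZMod n) = 1 := k.mul_inv
    rintro (i | i) <;> simp only [dihMap] <;> congr 1
    · linear_combination (i : ZMod n) * hk
    · linear_combination ((i : ZMod n) - m) * hk
  map_mul' := by
    rintro (i | i) (j | j) <;>
      simp only [DihedralGroup.r_mul_r, DihedralGroup.r_mul_sr, DihedralGroup.sr_mul_r,
        DihedralGroup.sr_mul_sr, dihMap] <;> congr 1 <;> ring


section Helpers

open DihedralGroup

@[simp] lemma dihAut_r (n : ℕ) (k : (ZMod n)ˣ) (m x : ZMod n) :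
    dihAut n k m (r x) = r ((k : ZMod n) * x) := rfl

@[simp] lemma dihAut_sr (n : ℕ) (k : (ZMod n)ˣ) (m x : ZMod n) :
    dihAut n k m (sr x) = sr ((k : ZMod n) * x + m) := rfl

lemma mem_autSub {G : Type*} [Group G] {C : Set G} {σ : MulAut G} :
    σ ∈ autSub C ↔ ⇑σ '' C = C := Iff.rfl

lemma r_pow' (n : ℕ) (x : ZMod n) (t : ℕ) : (r x) ^ t = r ((t : ZMod n) * x) := by
  induction t with
  | zero => simp
  | succ t ih => rw [pow_succ, ih, r_mul_r]; congr 1; push_cast; ring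

lemma r_inv' (n : ℕ) (x : ZMod n) : (r x : DihedralGroup n)⁻¹ = r (-x) :=
  inv_eq_of_mul_eq_one_right (by rw [r_mul_r, add_neg_cancel, one_def])

lemma r_zpow' (n : ℕ) (x : ZMod n) (t : ℤ) : (r x) ^ t = r ((t : ZMod n) * x) := by
  cases t with
  | ofNat t => rw [Int.ofNat_eq_coe, zpow_natCast, r_pow']; push_cast; ring_nf
  | negSucc t =>
      rw [zpow_negSucc, r_pow', r_inv']
      congr 1
      push_cast
      ring

lemma sr_inv' (n : ℕ) (x : ZMod n) : (sr x : DihedralGroup n)⁻¹ = sr x :=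
  inv_eq_of_mul_eq_one_right (sr_mul_self x)

lemma cast_ne' {n a b : ℕ} (ha : a < n) (hb : b < n) (hab : a ≠ b) :
    (a : ZMod n) ≠ (b : ZMod n) := by
  intro h
  have := (ZMod.natCast_eq_natCast_iff _ _ _).mp h
  rw [Nat.ModEq, Nat.mod_eq_of_lt ha, Nat.mod_eq_of_lt hb] at this
  exact hab this

lemma cast_ne_zero' {n a : ℕ} (h0 : 0 < a) (ha : a < n) : (a : ZMod n) ≠ 0 := by
  intro h
  have := Nat.le_of_dvd h0 ((ZMod.natCast_eq_zero_iff a n).mp h)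
  omega

lemma bezout_zmod {n i j : ℕ} (hij : Nat.Coprime i j) {x : ZMod n}
    (hi : (i : ZMod n) * x = 0) (hj : (j : ZMod n) * x = 0) : x = 0 := by
  obtain ⟨a, b, hab⟩ := Nat.isCoprime_iff_coprime.mpr hij
  have hcast : (a : ZMod n) * (i : ℕ) + (b : ZMod n) * (j : ℕ) = 1 := by
    exact_mod_cast congrArg (Int.cast : ℤ → ZMod n) hab
  linear_combination (a : ZMod n) * hi + (b : ZMod n) * hj - x * hcast

lemma gcd_contra' {n i j : ℕ} (hgi : 1 < Nat.gcd i n) (hij : Nat.Coprime i j)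
    (y : ZMod n) (h : (j : ZMod n) = (i : ZMod n) * y) : False := by
  set d := Nat.gcd i n with hd
  have hdn : d ∣ n := Nat.gcd_dvd_right i n
  have hdi : d ∣ i := Nat.gcd_dvd_left i n
  have h2 := congrArg (ZMod.castHom hdn (ZMod d)) h
  rw [map_mul, map_natCast, map_natCast,
    (ZMod.natCast_eq_zero_iff i d).mpr hdi, zero_mul] at h2
  have hdj : d ∣ j := (ZMod.natCast_eq_zero_iff j d).mp h2
  have h1 : d ∣ 1 := hij ▸ Nat.dvd_gcd hdi hdj
  have := Nat.le_of_dvd one_pos h1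
  omega

lemma unit_cancel {n : ℕ} (U : (ZMod n)ˣ) {x : ZMod n} (h : (U : ZMod n) * x = 0) :
    x = 0 := by
  calc x = ((U⁻¹ : (ZMod n)ˣ) : ZMod n) * ((U : ZMod n) * x) := by
        rw [← mul_assoc, Units.inv_mul, one_mul]
    _ = 0 := by rw [h, mul_zero]

lemma half_ne {n x y z : ℕ} (hn : 2 ∣ n)
    (hgy : 1 < Nat.gcd y n) (hgz : 1 < Nat.gcd z n)
    (hxy : Nat.Coprime x y) (hxz : Nat.Coprime x z) (hyz : Nat.Coprime y z) :
    x ≠ n / 2 := by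
  intro h
  have hdvd2 : ∀ w : ℕ, 1 < Nat.gcd w n → Nat.Coprime x w → 2 ∣ w := by
    intro w hgw hxw
    set d := Nat.gcd w n with hd
    have hdw : d ∣ w := Nat.gcd_dvd_left w n
    have hdn : d ∣ n := Nat.gcd_dvd_right w n
    have hcop : Nat.Coprime d x := Nat.Coprime.coprime_dvd_left hdw hxw.symm
    have hn2 : n = 2 * x := by rw [h]; omega
    have hd2 : d ∣ 2 := hcop.dvd_of_dvd_mul_right (hn2 ▸ hdn)
    have : d = 2 := by
      have := Nat.le_of_dvd (by norm_num) hd2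
      omega
    exact this ▸ hdw
  have h2y : 2 ∣ y := hdvd2 y hgy hxy
  have h2z : 2 ∣ z := hdvd2 z hgz hxz
  have : (2 : ℕ) ∣ 1 := hyz ▸ Nat.dvd_gcd h2y h2z
  omega

lemma rot_to_rot {n : ℕ} (hn : 3 ≤ n) (σ : MulAut (DihedralGroup n)) (x : ZMod n) :
    ∃ y : ZMod n, σ (r x) = r y := by
  have : NeZero n := ⟨by omega⟩
  have h1 : ∃ u : ZMod n, σ (r 1) = r u := by
    rcases h : σ (r 1) with u | u
    · exact ⟨u, rfl⟩
    · exfalso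
      have ho := orderOf_injective σ.toMonoidHom σ.injective (r 1 : DihedralGroup n)
      simp only [MulEquiv.coe_toMonoidHom] at ho
      rw [h, orderOf_sr, orderOf_r_one] at ho
      omega
  obtain ⟨u, hu⟩ := h1
  refine ⟨(x.val : ZMod n) * u, ?_⟩
  have hx : r x = (r 1 : DihedralGroup n) ^ x.val := by
    rw [r_pow', mul_one, ZMod.natCast_zmod_val]
  rw [hx, map_pow, hu, r_pow']

lemma exists_dihAut {n : ℕ} (hn : 3 ≤ n) (σ : MulAut (DihedralGroup n)) :
    ∃ (u : (ZMod n)ˣ) (c : ZMod n), σ = dihAut n u c := by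
  have : NeZero n := ⟨by omega⟩
  obtain ⟨u0, hu0⟩ := rot_to_rot hn σ 1
  have horder : orderOf (r u0 : DihedralGroup n) = n := by
    have ho := orderOf_injective σ.toMonoidHom σ.injective (r 1 : DihedralGroup n)
    simp only [MulEquiv.coe_toMonoidHom] at ho
    rw [hu0, orderOf_r_one] at ho
    exact ho
  rw [orderOf_r] at horder
  have hgdvd : Nat.gcd n u0.val ∣ n := Nat.gcd_dvd_left _ _
  have hg1 : Nat.gcd n u0.val = 1 := by
    have hmul := Nat.div_mul_cancel hgdvd
    rw [horder] at hmul
    have hnpos : 0 < n := by omega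
    exact Nat.eq_of_mul_eq_mul_left hnpos (by rw [hmul, mul_one])
  have hcop : Nat.Coprime u0.val n := Nat.coprime_comm.mp hg1
  refine ⟨ZMod.unitOfCoprime u0.val hcop, ?_⟩
  have hucoe : ((ZMod.unitOfCoprime u0.val hcop : (ZMod n)ˣ) : ZMod n) = u0 := by
    simp [ZMod.coe_unitOfCoprime, ZMod.natCast_zmod_val]
  have hsr0 : ∃ c : ZMod n, σ (sr 0) = sr c := by
    rcases h : σ (sr 0) with c | c
    · exfalso
      obtain ⟨y, hy⟩ := rot_to_rot hn σ⁻¹ c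
      have h2 : σ (r y) = r c := by
        have := congrArg (⇑σ) hy
        rw [MulAut.apply_inv_self] at this
        exact this.symm
      have := σ.injective (h.trans h2.symm)
      simp at this
    · exact ⟨c, rfl⟩
  obtain ⟨c, hc⟩ := hsr0
  refine ⟨c, ?_⟩
  apply MulEquiv.ext
  have hr : ∀ x : ZMod n, σ (r x) = r (u0 * x) := by
    intro x
    have hx : r x = (r 1 : DihedralGroup n) ^ x.val := by
      rw [r_pow', mul_one, ZMod.natCast_zmod_val]
    rw [hx, map_pow, hu0, r_pow', ZMod.natCast_zmod_val, mul_comm]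
  rintro (x | x)
  · rw [hr x, dihAut_r, hucoe]
  · rw [dihAut_sr, hucoe]
    have hx : (sr x : DihedralGroup n) = sr 0 * r x := by rw [sr_mul_r, zero_add]
    conv_lhs => rw [hx]
    rw [map_mul, hc, hr x, sr_mul_r, add_comm]

lemma pow_mod_two' {M : Type*} [Monoid M] {x : M} (h : x ^ 2 = 1) (v : ℕ) :
    x ^ (v % 2) = x ^ v := by
  conv_rhs => rw [← Nat.div_add_mod v 2]
  rw [pow_add, pow_mul, h, one_pow, one_mul]

end Helpers

set_option maxHeartbeats 2000000 in
theorem stmt16 (n : ℕ) (hn : 5 ≤ n) (i j k : ℕ)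
    (hi : 1 < i) (hin : i < n) (hj : 1 < j) (hjn : j < n) (hk : 1 < k) (hkn : k < n)
    (hij : Nat.Coprime i j) (hik : Nat.Coprime i k) (hjk : Nat.Coprime j k)
    (hgi : 1 < Nat.gcd i n) (hgj : 1 < Nat.gcd j n) (hgk : 1 < Nat.gcd k n)
    (l m : ℤ)
    (hl2 : ((l : ZMod n)) ^ 2 = 1) (hm2 : ((m : ZMod n)) ^ 2 = 1)
    (hl1 : (l : ZMod n) ≠ 1) (hm1 : (m : ZMod n) ≠ 1)
    (hlm1 : (l : ZMod n) * (m : ZMod n) ≠ 1)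
    (hk1 : (k : ZMod n) = (j : ZMod n) * (l : ZMod n) + (i : ZMod n))
    (hk2 : (k : ZMod n) = (i : ZMod n) * (m : ZMod n) + (j : ZMod n))
    (hil : (i : ZMod n) * ((l : ZMod n) + 1) = 0)
    (hjm : (j : ZMod n) * ((m : ZMod n) + 1) = 0)
    (C : Set (DihedralGroup n))
    (hCdef : C = {DihedralGroup.sr 0, DihedralGroup.sr (i : ZMod n),
      DihedralGroup.sr (j : ZMod n), DihedralGroup.sr (k : ZMod n)}) :
    C.ncard = 4 ∧ IsTransGenSet C ∧
    (n % 2 = 0 → i ≠ n / 2 ∧ j ≠ n / 2 ∧ k ≠ n / 2) ∧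
    ∃ ul um : (ZMod n)ˣ, (ul : ZMod n) = (l : ZMod n) ∧ (um : ZMod n) = (m : ZMod n) ∧
      autSub C = Subgroup.closure {dihAut n ul (i : ZMod n), dihAut n um (j : ZMod n)} ∧
      Nonempty (autSub C ≃* Multiplicative (ZMod 2) × Multiplicative (ZMod 2)) := by
  have hNZ : NeZero n := ⟨by omega⟩
  -- distinctness
  have hI0 : (i : ZMod n) ≠ 0 := cast_ne_zero' (by omega) hin
  have hJ0 : (j : ZMod n) ≠ 0 := cast_ne_zero' (by omega) hjn
  have hK0 : (k : ZMod n) ≠ 0 := cast_ne_zero' (by omega) hkn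
  have hijne : i ≠ j := by intro h; rw [h, Nat.coprime_self] at hij; omega
  have hikne : i ≠ k := by intro h; rw [h, Nat.coprime_self] at hik; omega
  have hjkne : j ≠ k := by intro h; rw [h, Nat.coprime_self] at hjk; omega
  have hIJ : (i : ZMod n) ≠ (j : ZMod n) := cast_ne' hin hjn hijne
  have hIK : (i : ZMod n) ≠ (k : ZMod n) := cast_ne' hin hkn hikne
  have hJK : (j : ZMod n) ≠ (k : ZMod n) := cast_ne' hjn hkn hjkne
  have hmemC : ∀ y : ZMod n, DihedralGroup.sr y ∈ C ↔
      (y = 0 ∨ y = (i : ZMod n) ∨ y = (j : ZMod n) ∨ y = (k : ZMod n)) := by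
    intro y
    rw [hCdef]
    simp [Set.mem_insert_iff, Set.mem_singleton_iff, DihedralGroup.sr.injEq]
  -- units
  have hLunit : ((l : ZMod n)) * ((l : ZMod n)) = 1 := by linear_combination hl2
  have hMunit : ((m : ZMod n)) * ((m : ZMod n)) = 1 := by linear_combination hm2
  obtain ⟨ul, hulc⟩ : ∃ ul : (ZMod n)ˣ, (ul : ZMod n) = (l : ZMod n) :=
    ⟨⟨(l : ZMod n), (l : ZMod n), hLunit, hLunit⟩, rfl⟩
  obtain ⟨um, humc⟩ : ∃ um : (ZMod n)ˣ, (um : ZMod n) = (m : ZMod n) :=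
    ⟨⟨(m : ZMod n), (m : ZMod n), hMunit, hMunit⟩, rfl⟩
  set A := dihAut n ul (i : ZMod n) with hAdef
  set B := dihAut n um (j : ZMod n) with hBdef
  have evA : ∀ x : ZMod n, A (DihedralGroup.sr x) =
      DihedralGroup.sr ((l : ZMod n) * x + (i : ZMod n)) := by
    intro x; rw [hAdef, dihAut_sr, hulc]
  have evB : ∀ x : ZMod n, B (DihedralGroup.sr x) =
      DihedralGroup.sr ((m : ZMod n) * x + (j : ZMod n)) := by
    intro x; rw [hBdef, dihAut_sr, humc]
  -- exponent arithmetic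
  have eA0 : (l : ZMod n) * 0 + (i : ZMod n) = (i : ZMod n) := by ring
  have eAi : (l : ZMod n) * (i : ZMod n) + (i : ZMod n) = 0 := by linear_combination hil
  have eAj : (l : ZMod n) * (j : ZMod n) + (i : ZMod n) = (k : ZMod n) := by
    linear_combination (-1 : ZMod n) * hk1
  have eAk : (l : ZMod n) * (k : ZMod n) + (i : ZMod n) = (j : ZMod n) := by
    linear_combination (l : ZMod n) * hk1 + hil + (j : ZMod n) * hl2
  have eB0 : (m : ZMod n) * 0 + (j : ZMod n) = (j : ZMod n) := by ring
  have eBj : (m : ZMod n) * (j : ZMod n) + (j : ZMod n) = 0 := by linear_combination hjm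
  have eBi : (m : ZMod n) * (i : ZMod n) + (j : ZMod n) = (k : ZMod n) := by
    linear_combination (-1 : ZMod n) * hk2
  have eBk : (m : ZMod n) * (k : ZMod n) + (j : ZMod n) = (i : ZMod n) := by
    linear_combination (m : ZMod n) * hk2 + hjm + (i : ZMod n) * hm2
  -- memberships
  have hAmem : A ∈ autSub C := by
    rw [mem_autSub, hCdef]
    rw [Set.image_insert_eq, Set.image_insert_eq, Set.image_insert_eq, Set.image_singleton]
    rw [evA, evA, evA, evA, eA0, eAi, eAj, eAk]
    apply Set.ext
    intro t
    simp only [Set.mem_insert_iff, Set.mem_singleton_iff]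
    tauto
  have hBmem : B ∈ autSub C := by
    rw [mem_autSub, hCdef]
    rw [Set.image_insert_eq, Set.image_insert_eq, Set.image_insert_eq, Set.image_singleton]
    rw [evB, evB, evB, evB, eB0, eBi, eBj, eBk]
    apply Set.ext
    intro t
    simp only [Set.mem_insert_iff, Set.mem_singleton_iff]
    tauto
  -- A*B
  have hABdef : A * B = dihAut n (ul * um) (k : ZMod n) := by
    apply MulEquiv.ext
    rintro (x | x)
    · rw [MulAut.mul_apply, hBdef, dihAut_r, hAdef, dihAut_r, dihAut_r]
      congr 1
      rw [Units.val_mul, mul_assoc]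
    · rw [MulAut.mul_apply, hBdef, dihAut_sr, hAdef, dihAut_sr, dihAut_sr]
      congr 1
      rw [Units.val_mul, hulc, humc]
      linear_combination (-1 : ZMod n) * hk1
  -- classification
  have hclass : ∀ σ : MulAut (DihedralGroup n), σ ∈ autSub C →
      σ = 1 ∨ σ = A ∨ σ = B ∨ σ = A * B := by
    intro σ hσ
    obtain ⟨U, c, rfl⟩ := exists_dihAut (by omega) σ
    rw [mem_autSub] at hσ
    have hfwd : ∀ x : ZMod n, (x = 0 ∨ x = (i : ZMod n) ∨ x = (j : ZMod n) ∨ x = (k : ZMod n)) →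
        ((U : ZMod n) * x + c = 0 ∨ (U : ZMod n) * x + c = (i : ZMod n) ∨
          (U : ZMod n) * x + c = (j : ZMod n) ∨ (U : ZMod n) * x + c = (k : ZMod n)) := by
      intro x hx
      have hmem : DihedralGroup.sr x ∈ C := (hmemC x).mpr hx
      have h2 : dihAut n U c (DihedralGroup.sr x) ∈ C := by
        rw [← hσ]; exact Set.mem_image_of_mem _ hmem
      rw [dihAut_sr] at h2
      exact (hmemC _).mp h2
    have h0 := hfwd 0 (Or.inl rfl)
    rw [mul_zero, zero_add] at h0
    have hi' := hfwd _ (Or.inr (Or.inl rfl))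
    have hj' := hfwd _ (Or.inr (Or.inr (Or.inl rfl)))
    rcases h0 with hc | hc | hc | hc <;> subst hc
    · -- c = 0
      left
      rw [add_zero] at hi' hj'
      have hui : (U : ZMod n) * (i : ZMod n) = (i : ZMod n) := by
        rcases hi' with h | h | h | h
        · exact absurd (unit_cancel U h) hI0
        · exact h
        · exact (gcd_contra' hgi hij ((U : ZMod n)) (by linear_combination -h)).elim
        · exact (gcd_contra' hgi hik ((U : ZMod n)) (by linear_combination -h)).elim
      have huj : (U : ZMod n) * (j : ZMod n) = (j : ZMod n) := by
        rcases hj' with h | h | h | h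
        · exact absurd (unit_cancel U h) hJ0
        · exact (gcd_contra' hgj hij.symm ((U : ZMod n)) (by linear_combination -h)).elim
        · exact h
        · exact (gcd_contra' hgj hjk ((U : ZMod n)) (by linear_combination -h)).elim
      have hU : (U : ZMod n) = 1 := eq_of_sub_eq_zero
        (bezout_zmod hij (by linear_combination hui) (by linear_combination huj))
      have hU1 : U = 1 := Units.ext (by rw [hU, Units.val_one])
      rw [hU1]
      apply MulEquiv.ext
      rintro (x | x) <;> simp
    · -- c = i
      right; left
      have hui : (U : ZMod n) * (i : ZMod n) + (i : ZMod n) = 0 := by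
        rcases hi' with h | h | h | h
        · exact h
        · exact absurd (unit_cancel U (by linear_combination h)) hI0
        · exact (gcd_contra' hgi hij ((U : ZMod n) + 1) (by linear_combination -h)).elim
        · exact (gcd_contra' hgi hij ((U : ZMod n) * (l : ZMod n))
            (by linear_combination (-(l : ZMod n)) * h + (-(l : ZMod n)) * hk1
              + (-(j : ZMod n)) * hl2)).elim
      have huj : (U : ZMod n) * (j : ZMod n) + (i : ZMod n) = (k : ZMod n) := by
        rcases hj' with h | h | h | h
        · exact (gcd_contra' hgj hij.symm (-(U : ZMod n)) (by linear_combination h)).elim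
        · exact absurd (unit_cancel U (by linear_combination h)) hJ0
        · exact (gcd_contra' hgj hij.symm (1 - (U : ZMod n)) (by linear_combination h)).elim
        · exact h
      have hU : (U : ZMod n) = (l : ZMod n) := eq_of_sub_eq_zero
        (bezout_zmod hij (by linear_combination hui - hil) (by linear_combination huj + hk1))
      have hU1 : U = ul := Units.ext (by rw [hU, hulc])
      rw [hU1]
    · -- c = j
      right; right; left
      have hui : (U : ZMod n) * (i : ZMod n) + (j : ZMod n) = (k : ZMod n) := by
        rcases hi' with h | h | h | h
        · exact (gcd_contra' hgi hij (-(U : ZMod n)) (by linear_combination h)).elim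
        · exact (gcd_contra' hgi hij (1 - (U : ZMod n)) (by linear_combination h)).elim
        · exact absurd (unit_cancel U (by linear_combination h)) hI0
        · exact h
      have huj : (U : ZMod n) * (j : ZMod n) + (j : ZMod n) = 0 := by
        rcases hj' with h | h | h | h
        · exact h
        · exact (gcd_contra' hgj hij.symm ((U : ZMod n) + 1) (by linear_combination -h)).elim
        · exact absurd (unit_cancel U (by linear_combination h)) hJ0
        · exact (gcd_contra' hgj hij.symm ((U : ZMod n) * (m : ZMod n))
            (by linear_combination (-(m : ZMod n)) * h + (-(m : ZMod n)) * hk2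
              + (-(i : ZMod n)) * hm2)).elim
      have hU : (U : ZMod n) = (m : ZMod n) := eq_of_sub_eq_zero
        (bezout_zmod hij (by linear_combination hui + hk2) (by linear_combination huj - hjm))
      have hU1 : U = um := Units.ext (by rw [hU, humc])
      rw [hU1]
    · -- c = k
      right; right; right
      have hui : (U : ZMod n) * (i : ZMod n) + (k : ZMod n) = (j : ZMod n) := by
        rcases hi' with h | h | h | h
        · exact (gcd_contra' hgi hik (-(U : ZMod n)) (by linear_combination h)).elim
        · exact (gcd_contra' hgi hik (1 - (U : ZMod n)) (by linear_combination h)).elim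
        · exact h
        · exact absurd (unit_cancel U (by linear_combination h)) hI0
      have huj : (U : ZMod n) * (j : ZMod n) + (k : ZMod n) = (i : ZMod n) := by
        rcases hj' with h | h | h | h
        · exact (gcd_contra' hgj hij.symm (-((U : ZMod n) + (l : ZMod n)))
            (by linear_combination h - hk1)).elim
        · exact h
        · exact (gcd_contra' hgj hjk (1 - (U : ZMod n)) (by linear_combination h)).elim
        · exact absurd (unit_cancel U (by linear_combination h)) hJ0
      have hU : (U : ZMod n) = (l : ZMod n) * (m : ZMod n) := eq_of_sub_eq_zero
        (bezout_zmod hij (by linear_combination hui - hk2 - (m : ZMod n) * hil)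
          (by linear_combination huj - hk1 - (l : ZMod n) * hjm))
      have hU1 : U = ul * um := Units.ext (by rw [Units.val_mul, hulc, humc, hU])
      rw [hU1]
      exact hABdef.symm
  -- group facts
  have hA2 : A * A = 1 := by
    apply MulEquiv.ext
    rintro (x | x)
    · rw [MulAut.mul_apply, hAdef, dihAut_r, dihAut_r, MulAut.one_apply, hulc]
      congr 1
      linear_combination x * hl2
    · rw [MulAut.mul_apply, hAdef, dihAut_sr, dihAut_sr, MulAut.one_apply, hulc]
      congr 1
      linear_combination x * hl2 + hil
  have hB2 : B * B = 1 := by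
    apply MulEquiv.ext
    rintro (x | x)
    · rw [MulAut.mul_apply, hBdef, dihAut_r, dihAut_r, MulAut.one_apply, humc]
      congr 1
      linear_combination x * hm2
    · rw [MulAut.mul_apply, hBdef, dihAut_sr, dihAut_sr, MulAut.one_apply, humc]
      congr 1
      linear_combination x * hm2 + hjm
  have hcommAB : A * B = B * A := by
    apply MulEquiv.ext
    rintro (x | x)
    · rw [MulAut.mul_apply, MulAut.mul_apply, hAdef, hBdef, dihAut_r, dihAut_r,
        dihAut_r, dihAut_r, hulc, humc]
      congr 1
      ring
    · rw [MulAut.mul_apply, MulAut.mul_apply, hAdef, hBdef, dihAut_sr, dihAut_sr,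
        dihAut_sr, dihAut_sr, hulc, humc]
      congr 1
      linear_combination hk2 - hk1
  -- evaluations at sr 0 etc.
  have hA0 : A (DihedralGroup.sr 0) = DihedralGroup.sr (i : ZMod n) := by rw [evA, eA0]
  have hAi : A (DihedralGroup.sr (i : ZMod n)) = DihedralGroup.sr 0 := by rw [evA, eAi]
  have hB0 : B (DihedralGroup.sr 0) = DihedralGroup.sr (j : ZMod n) := by rw [evB, eB0]
  have hBj : B (DihedralGroup.sr (j : ZMod n)) = DihedralGroup.sr 0 := by rw [evB, eBj]
  have hAB0 : (A * B) (DihedralGroup.sr 0) = DihedralGroup.sr (k : ZMod n) := by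
    rw [MulAut.mul_apply, hB0, evA, eAj]
  have hABk : (A * B) (DihedralGroup.sr (k : ZMod n)) = DihedralGroup.sr 0 := by
    rw [MulAut.mul_apply, evB, eBk, hAi]
  have hAne1 : A ≠ 1 := by
    intro h
    rw [h, MulAut.one_apply] at hA0
    exact hI0 (by injection hA0 with h'; exact h'.symm)
  have hBne1 : B ≠ 1 := by
    intro h
    rw [h, MulAut.one_apply] at hB0
    exact hJ0 (by injection hB0 with h'; exact h'.symm)
  have hABne1 : A * B ≠ 1 := by
    intro h
    rw [h, MulAut.one_apply] at hAB0
    exact hK0 (by injection hAB0 with h'; exact h'.symm)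
  -- closure equality
  have hcl : autSub C = Subgroup.closure {A, B} := by
    apply le_antisymm
    · intro σ hσ
      rcases hclass σ hσ with rfl | rfl | rfl | rfl
      · exact one_mem _
      · exact Subgroup.subset_closure (Set.mem_insert _ _)
      · exact Subgroup.subset_closure (Set.mem_insert_of_mem _ rfl)
      · exact mul_mem (Subgroup.subset_closure (Set.mem_insert _ _))
          (Subgroup.subset_closure (Set.mem_insert_of_mem _ rfl))
    · rw [Subgroup.closure_le]
      rintro σ (rfl | rfl)
      · exact hAmem
      · exact hBmem
  -- the Klein four iso
  have hiso : Nonempty (autSub C ≃* Multiplicative (ZMod 2) × Multiplicative (ZMod 2)) := by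
    set At : autSub C := ⟨A, hAmem⟩ with hAtdef
    set Bt : autSub C := ⟨B, hBmem⟩ with hBtdef
    have hAt2 : At ^ 2 = 1 := by
      apply Subtype.ext
      rw [SubmonoidClass.coe_pow, sq]
      exact hA2
    have hBt2 : Bt ^ 2 = 1 := by
      apply Subtype.ext
      rw [SubmonoidClass.coe_pow, sq]
      exact hB2
    have hcommt : Commute At Bt := Subtype.ext hcommAB
    have keyA : ∀ v w : ZMod 2, At ^ (v + w).val = At ^ v.val * At ^ w.val := by
      intro v w
      rw [ZMod.val_add, pow_mod_two' hAt2, pow_add]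
    have keyB : ∀ v w : ZMod 2, Bt ^ (v + w).val = Bt ^ v.val * Bt ^ w.val := by
      intro v w
      rw [ZMod.val_add, pow_mod_two' hBt2, pow_add]
    let f : Multiplicative (ZMod 2) × Multiplicative (ZMod 2) →* autSub C :=
      { toFun := fun p => At ^ (Multiplicative.toAdd p.1).val * Bt ^ (Multiplicative.toAdd p.2).val
        map_one' := by simp
        map_mul' := fun p q => by
          simp only [Prod.fst_mul, Prod.snd_mul, toAdd_mul]
          rw [keyA, keyB]
          exact (hcommt.pow_pow _ _).mul_mul_mul_comm _ _ }
    have hf1 : f (Multiplicative.ofAdd (1 : ZMod 2), 1) = At := by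
      show At ^ (1 : ZMod 2).val * Bt ^ (0 : ZMod 2).val = At
      rw [ZMod.val_one, ZMod.val_zero, pow_one, pow_zero, mul_one]
    have hf2 : f (1, Multiplicative.ofAdd (1 : ZMod 2)) = Bt := by
      show At ^ (0 : ZMod 2).val * Bt ^ (1 : ZMod 2).val = Bt
      rw [ZMod.val_one, ZMod.val_zero, pow_one, pow_zero, one_mul]
    have hf3 : f (Multiplicative.ofAdd (1 : ZMod 2), Multiplicative.ofAdd (1 : ZMod 2))
        = At * Bt := by
      show At ^ (1 : ZMod 2).val * Bt ^ (1 : ZMod 2).val = At * Bt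
      rw [ZMod.val_one, pow_one, pow_one]
    have hcases : ∀ p : Multiplicative (ZMod 2) × Multiplicative (ZMod 2),
        p = 1 ∨ p = (Multiplicative.ofAdd (1 : ZMod 2), 1) ∨
        p = (1, Multiplicative.ofAdd (1 : ZMod 2)) ∨
        p = (Multiplicative.ofAdd (1 : ZMod 2), Multiplicative.ofAdd (1 : ZMod 2)) := by
      decide
    have hinj : Function.Injective f := by
      rw [injective_iff_map_eq_one]
      intro p hp
      rcases hcases p with rfl | rfl | rfl | rfl
      · rfl
      · rw [hf1] at hp
        have := Subtype.ext_iff.mp hp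
        rw [OneMemClass.coe_one] at this
        exact absurd this hAne1
      · rw [hf2] at hp
        have := Subtype.ext_iff.mp hp
        rw [OneMemClass.coe_one] at this
        exact absurd this hBne1
      · rw [hf3] at hp
        have := Subtype.ext_iff.mp hp
        rw [OneMemClass.coe_one] at this
        exact absurd this hABne1
    have hsurj : Function.Surjective f := by
      rintro ⟨σ, hσ⟩
      rcases hclass σ hσ with rfl | rfl | rfl | rfl
      · exact ⟨1, by rw [map_one]; exact Subtype.ext rfl⟩
      · exact ⟨(Multiplicative.ofAdd (1 : ZMod 2), 1), by rw [hf1]⟩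
      · exact ⟨(1, Multiplicative.ofAdd (1 : ZMod 2)), by rw [hf2]⟩
      · exact ⟨(Multiplicative.ofAdd (1 : ZMod 2), Multiplicative.ofAdd (1 : ZMod 2)),
          by rw [hf3]; exact Subtype.ext rfl⟩
    exact ⟨(MulEquiv.ofBijective f ⟨hinj, hsurj⟩).symm⟩
  -- generation
  have hclosure : Subgroup.closure C = ⊤ := by
    rw [eq_top_iff]
    rintro g -
    have hb : DihedralGroup.sr 0 ∈ Subgroup.closure C :=
      Subgroup.subset_closure (by rw [hCdef]; exact Set.mem_insert _ _)
    have hbi : DihedralGroup.sr (i : ZMod n) ∈ Subgroup.closure C :=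
      Subgroup.subset_closure (by rw [hCdef]; exact Set.mem_insert_of_mem _ (Set.mem_insert _ _))
    have hbj : DihedralGroup.sr (j : ZMod n) ∈ Subgroup.closure C := by
      apply Subgroup.subset_closure
      rw [hCdef]
      exact Set.mem_insert_of_mem _ (Set.mem_insert_of_mem _ (Set.mem_insert _ _))
    have hri : DihedralGroup.r (i : ZMod n) ∈ Subgroup.closure C := by
      have hh : DihedralGroup.sr 0 * DihedralGroup.sr (i : ZMod n) =
          DihedralGroup.r (i : ZMod n) := by rw [DihedralGroup.sr_mul_sr, sub_zero]
      exact hh ▸ mul_mem hb hbi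
    have hrj : DihedralGroup.r (j : ZMod n) ∈ Subgroup.closure C := by
      have hh : DihedralGroup.sr 0 * DihedralGroup.sr (j : ZMod n) =
          DihedralGroup.r (j : ZMod n) := by rw [DihedralGroup.sr_mul_sr, sub_zero]
      exact hh ▸ mul_mem hb hbj
    obtain ⟨a, b, hab⟩ := Nat.isCoprime_iff_coprime.mpr hij
    have hr1 : DihedralGroup.r (1 : ZMod n) ∈ Subgroup.closure C := by
      have hh : (DihedralGroup.r (i : ZMod n)) ^ a * (DihedralGroup.r (j : ZMod n)) ^ b =
          DihedralGroup.r (1 : ZMod n) := by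
        rw [r_zpow', r_zpow', DihedralGroup.r_mul_r]
        congr 1
        have hcast := congrArg (Int.cast : ℤ → ZMod n) hab
        push_cast at hcast
        linear_combination hcast
      exact hh ▸ mul_mem (zpow_mem hri a) (zpow_mem hrj b)
    rcases g with x | x
    · have hh : (DihedralGroup.r (1 : ZMod n)) ^ x.val = DihedralGroup.r x := by
        rw [r_pow', mul_one, ZMod.natCast_zmod_val]
      exact hh ▸ pow_mem hr1 x.val
    · have hh : DihedralGroup.sr 0 * (DihedralGroup.r (1 : ZMod n)) ^ x.val =
          DihedralGroup.sr x := by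
        rw [r_pow', mul_one, ZMod.natCast_zmod_val, DihedralGroup.sr_mul_r, zero_add]
      exact hh ▸ mul_mem hb (pow_mem hr1 x.val)
  -- transitivity
  have hswap : ∀ cc ∈ C, ∃ σ ∈ autSub C,
      σ (DihedralGroup.sr 0) = cc ∧ σ cc = DihedralGroup.sr 0 := by
    intro cc hcc
    rw [hCdef] at hcc
    simp only [Set.mem_insert_iff, Set.mem_singleton_iff] at hcc
    rcases hcc with rfl | rfl | rfl | rfl
    · exact ⟨1, one_mem _, MulAut.one_apply _ _, MulAut.one_apply _ _⟩
    · exact ⟨A, hAmem, hA0, hAi⟩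
    · exact ⟨B, hBmem, hB0, hBj⟩
    · exact ⟨A * B, mul_mem hAmem hBmem, hAB0, hABk⟩
  have htrans : TransSet C := by
    left
    intro c hc c' hc'
    obtain ⟨σ₁, hσ₁m, _, hσ₁c⟩ := hswap c hc
    obtain ⟨σ₂, hσ₂m, hσ₂0, _⟩ := hswap c' hc'
    exact ⟨σ₂ * σ₁, mul_mem hσ₂m hσ₁m, by rw [MulAut.mul_apply, hσ₁c, hσ₂0]⟩
  refine ⟨?_, ⟨?_, ?_, hclosure, htrans⟩, ?_, ul, um, hulc, humc, ?_, hiso⟩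
  · -- ncard
    rw [hCdef]
    rw [Set.ncard_insert_of_notMem (by
        simp only [Set.mem_insert_iff, Set.mem_singleton_iff, DihedralGroup.sr.injEq]
        push_neg
        exact ⟨fun h => hI0 h.symm, fun h => hJ0 h.symm, fun h => hK0 h.symm⟩),
      Set.ncard_insert_of_notMem (by
        simp only [Set.mem_insert_iff, Set.mem_singleton_iff, DihedralGroup.sr.injEq]
        push_neg
        exact ⟨hIJ, hIK⟩),
      Set.ncard_insert_of_notMem (by
        simp only [Set.mem_singleton_iff, DihedralGroup.sr.injEq]
        exact hJK),
      Set.ncard_singleton]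
  · -- 1 ∉ C
    intro h
    rw [hCdef, DihedralGroup.one_def] at h
    simp [-DihedralGroup.r_zero] at h
  · -- inverse closed
    intro cc hcc
    rw [hCdef] at hcc ⊢
    simp only [Set.mem_insert_iff, Set.mem_singleton_iff] at hcc ⊢
    rcases hcc with rfl | rfl | rfl | rfl <;> rw [sr_inv'] <;> tauto
  · -- n even
    intro h2
    have hdvd : 2 ∣ n := Nat.dvd_of_mod_eq_zero h2
    exact ⟨half_ne hdvd hgj hgk hij hik hjk,
      half_ne hdvd hgi hgk hij.symm hjk hik,
      half_ne hdvd hgi hgj hik.symm hjk.symm hij⟩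
  · -- closure equality
    rw [← hAdef, ← hBdef]
    exact hcl

end NETCayley
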